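/- arXiv:2107.10978 — 2 statements merged into one kernel-verified Lean document; each statement's English description precedes it below -/
import Mathlib

section
/- For any real a > 0 and positive integer n, ∑_{k=1}^{n} ψ₀(k+a)² = (a+n)ψ₀(a+n+1)² − (2a+2n+1)ψ₀(a+n+1) − a·ψ₀(a+1)² + (2a+1)ψ₀(a+1) + 2n. -/
open Finset

/-- The `m`-th polygamma function: the `(m+1)`-th derivative of `log ∘ Γ`. -/
noncomputable def psi (m : ℕ) (x : ℝ) : ℝ :=
  iteratedDeriv (m + 1) (fun y => Real.log (Real.Gamma y)) x

lemma psi0_eq (x : ℝ) : psi 0 x = deriv (fun y => Real.log (Real.Gamma y)) x := by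
  simp [psi, iteratedDeriv_one]

lemma logGamma_diff {x : ℝ} (hx : 0 < x) :
    DifferentiableAt ℝ (fun y => Real.log (Real.Gamma y)) x := by
  have h1 : DifferentiableAt ℝ Real.Gamma x := by
    apply Real.differentiableAt_Gamma
    intro m
    have : (0:ℝ) ≤ m := m.cast_nonneg
    nlinarith
  exact (Real.differentiableAt_log (Real.Gamma_pos_of_pos hx).ne').comp x h1

lemma psi0_rec {x : ℝ} (hx : 0 < x) : psi 0 (x + 1) = psi 0 x + 1 / x := by
  rw [psi0_eq, psi0_eq]
  have h1 : deriv (fun y => Real.log (Real.Gamma y)) (x + 1)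
      = deriv (fun y => Real.log (Real.Gamma (y + 1))) x :=
    (deriv_comp_add_const _ _ _).symm
  rw [h1]
  have h2 : (fun y => Real.log (Real.Gamma (y + 1)))
      =ᶠ[nhds x] (fun y => Real.log y + Real.log (Real.Gamma y)) := by
    filter_upwards [eventually_gt_nhds hx] with y hy
    rw [Real.Gamma_add_one hy.ne', Real.log_mul hy.ne' (Real.Gamma_pos_of_pos hy).ne']
  rw [h2.deriv_eq, deriv_fun_add (Real.differentiableAt_log hx.ne') (logGamma_diff hx),
    Real.deriv_log, add_comm, one_div]

lemma stmt_aux (a : ℝ) (ha : 0 < a) (n : ℕ) :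
    ∑ k ∈ Icc 1 n, (psi 0 ((k : ℝ) + a))^2 =
      (a + n) * (psi 0 (a + n + 1))^2 - (2*a + 2*n + 1) * psi 0 (a + n + 1) -
        a * (psi 0 (a + 1))^2 + (2*a + 1) * psi 0 (a + 1) + 2*n := by
  induction n with
  | zero => simp
  | succ n ih =>
    rw [Finset.sum_Icc_succ_top (Nat.one_le_iff_ne_zero.mpr (Nat.succ_ne_zero n)), ih]
    have hpos : (0:ℝ) < a + n + 1 := by positivity
    have hrec : psi 0 (a + (n+1 : ℕ) + 1) = psi 0 (a + n + 1) + 1 / (a + n + 1) := by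
      have := psi0_rec hpos
      push_cast
      convert this using 2 <;> ring
    have harg : ((n+1 : ℕ) : ℝ) + a = a + n + 1 := by push_cast; ring
    rw [hrec, harg]
    push_cast
    field_simp
    ring

theorem stmt_2 (a : ℝ) (ha : 0 < a) (n : ℕ) (hn : 0 < n) :
    ∑ k ∈ Icc 1 n, (psi 0 ((k : ℝ) + a))^2 =
      (a + n) * (psi 0 (a + n + 1))^2 - (2*a + 2*n + 1) * psi 0 (a + n + 1) -
        a * (psi 0 (a + 1))^2 + (2*a + 1) * psi 0 (a + 1) + 2*n := by
  exact stmt_aux a ha n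
end

section
/- For any real a > 0 and positive integer n, ∑_{k=1}^{n} [ψ₀(k+a)² + ψ₁(k+a)]/(k+a) = (1/3)[ψ₂(a+n+1) − ψ₂(a+1) + 3ψ₀(a+n+1)ψ₁(a+n+1) − 3ψ₀(a+1)ψ₁(a+1) + ψ₀(a+n+1)³ − ψ₀(a+1)³]. -/
open Finset

open Set Filter Topology in
lemma myAnalyticGamma {x : ℝ} (hx : 0 < x) : AnalyticAt ℝ Real.Gamma x := by
  have h1 : AnalyticAt ℂ (fun s => (Complex.Gamma s)⁻¹) (x : ℂ) :=
    Complex.differentiable_one_div_Gamma.analyticAt _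
  have h0 : Complex.Gamma (x : ℂ) ≠ 0 := by
    rw [Complex.Gamma_ofReal]
    exact_mod_cast (Real.Gamma_pos_of_pos hx).ne'
  have h2 : AnalyticAt ℂ Complex.Gamma (x : ℂ) := by
    have := (h1.inv (inv_ne_zero h0))
    exact this.congr (Filter.Eventually.of_forall fun s => inv_inv _)
  have h3 : AnalyticAt ℝ (fun t : ℝ => (Complex.Gamma (t : ℂ)).re) x := by
    exact (Complex.reCLM.analyticAt _).comp
      ((h2.restrictScalars).comp (Complex.ofRealCLM.analyticAt x))
  refine h3.congr (Filter.Eventually.of_forall fun t => ?_)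
  simp only [Complex.Gamma_ofReal, Complex.ofReal_re]

open Set in
lemma myContDiffOnLogGamma (n : ℕ) :
    ContDiffOn ℝ n (fun y => Real.log (Real.Gamma y)) (Set.Ioi 0) := by
  intro y hy
  have hy' : (0 : ℝ) < y := hy
  have h1 : ContDiffAt ℝ n Real.Gamma y := (myAnalyticGamma hy').contDiffAt
  have h2 : ContDiffAt ℝ n Real.log (Real.Gamma y) :=
    Real.contDiffAt_log.mpr (Real.Gamma_pos_of_pos hy').ne'
  exact (h2.comp y h1).contDiffWithinAt

open Set in
lemma myIteratedDerivWithinIoi (n : ℕ) (f : ℝ → ℝ) {x : ℝ} (hx : 0 < x) :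
    iteratedDerivWithin n f (Set.Ioi 0) x = iteratedDeriv n f x := by
  rw [iteratedDerivWithin_eq_iteratedFDerivWithin, iteratedDeriv_eq_iteratedFDeriv,
    iteratedFDerivWithin_of_isOpen n isOpen_Ioi hx]

open Set Filter Topology in
/-- The recurrence `ψₘ(x+1) = ψₘ(x) + (log)⁽ᵐ⁺¹⁾(x)` for `x > 0`. -/
lemma psi_rec (m : ℕ) {x : ℝ} (hx : 0 < x) :
    psi m (x + 1) = psi m x + iteratedDeriv (m + 1) Real.log x := by
  have h1 : (fun y => Real.log (Real.Gamma (y + 1))) =ᶠ[𝓝 x]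
      (fun y => Real.log y + Real.log (Real.Gamma y)) := by
    filter_upwards [Ioi_mem_nhds hx] with y hy
    have hy' : (0 : ℝ) < y := hy
    rw [Real.Gamma_add_one hy'.ne', Real.log_mul hy'.ne' (Real.Gamma_pos_of_pos hy').ne']
  have key : psi m (x + 1)
      = iteratedDeriv (m + 1) (fun y => Real.log y + Real.log (Real.Gamma y)) x := by
    have := congrFun (iteratedDeriv_comp_add_const (m + 1)
      (fun y => Real.log (Real.Gamma y)) 1) x
    rw [psi, ← this]
    exact h1.iteratedDeriv_eq (m + 1)
  have hlog : ContDiffOn ℝ (m + 1 : ℕ) Real.log (Set.Ioi 0) :=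
    Real.contDiffOn_log.mono (fun y hy => ne_of_gt (α := ℝ) hy)
  have hadd := iteratedDerivWithin_add (f := Real.log)
    (g := fun y => Real.log (Real.Gamma y)) (n := m + 1) (Set.mem_Ioi.mpr hx)
    isOpen_Ioi.uniqueDiffOn (hlog x hx) (myContDiffOnLogGamma (m + 1) x hx)
  have hpi : (Real.log + fun y => Real.log (Real.Gamma y))
      = (fun y => Real.log y + Real.log (Real.Gamma y)) := rfl
  rw [hpi] at hadd
  rw [key, ← myIteratedDerivWithinIoi (m + 1) _ hx, hadd,
    myIteratedDerivWithinIoi (m + 1) _ hx, myIteratedDerivWithinIoi (m + 1) _ hx, psi, add_comm]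

lemma myIterLog1 {x : ℝ} (hx : 0 < x) : iteratedDeriv 1 Real.log x = x⁻¹ := by
  rw [iteratedDeriv_one, Real.deriv_log]

lemma myIterLog2 {x : ℝ} (hx : 0 < x) : iteratedDeriv 2 Real.log x = -(x ^ 2)⁻¹ := by
  rw [show (2 : ℕ) = 1 + 1 from rfl, iteratedDeriv_succ, iteratedDeriv_one,
    Real.deriv_log', deriv_inv]

lemma myIterLog3 {x : ℝ} (hx : 0 < x) : iteratedDeriv 3 Real.log x = 2 / x ^ 3 := by
  rw [show (3 : ℕ) = 2 + 1 from rfl, iteratedDeriv_succ]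
  have h2 : iteratedDeriv 2 Real.log = fun y : ℝ => -(y ^ 2)⁻¹ := by
    funext y
    rw [show (2 : ℕ) = 1 + 1 from rfl, iteratedDeriv_succ, iteratedDeriv_one,
      Real.deriv_log', deriv_inv]
  rw [h2]
  have h : HasDerivAt (fun y : ℝ => -(y ^ 2)⁻¹) (2 / x ^ 3) x := by
    have hp : HasDerivAt (fun y : ℝ => y ^ 2) (2 * x ^ 1) x := by
      simpa using hasDerivAt_pow 2 x
    have : HasDerivAt (fun y : ℝ => -(y ^ 2)⁻¹) (-(-(2 * x ^ 1) / (x ^ 2) ^ 2)) x :=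
      (hp.inv (pow_ne_zero 2 hx.ne')).neg
    convert this using 1
    have hx0 : x ≠ 0 := hx.ne'
    field_simp
  exact h.deriv

noncomputable def myPhi (x : ℝ) : ℝ :=
  (1 / 3) * (psi 2 x + 3 * psi 0 x * psi 1 x + (psi 0 x) ^ 3)

lemma myKey {x : ℝ} (hx : 0 < x) :
    ((psi 0 x) ^ 2 + psi 1 x) / x = myPhi (x + 1) - myPhi x := by
  have h0 := psi_rec 0 hx
  have h1 := psi_rec 1 hx
  have h2 := psi_rec 2 hx
  rw [myIterLog1 hx] at h0
  rw [myIterLog2 hx] at h1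
  rw [myIterLog3 hx] at h2
  simp only [myPhi, h0, h1, h2]
  field_simp
  ring

theorem stmt_9 (a : ℝ) (ha : 0 < a) (n : ℕ) (hn : 0 < n) :
    ∑ k ∈ Icc 1 n, ((psi 0 ((k : ℝ) + a))^2 + psi 1 ((k : ℝ) + a)) / ((k : ℝ) + a) =
      (1/3) * (psi 2 (a + n + 1) - psi 2 (a + 1) + 3 * psi 0 (a + n + 1) * psi 1 (a + n + 1) -
        3 * psi 0 (a + 1) * psi 1 (a + 1) + (psi 0 (a + n + 1))^3 - (psi 0 (a + 1))^3) := by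
  have main : ∀ m : ℕ, ∑ k ∈ Icc 1 m, ((psi 0 ((k : ℝ) + a))^2 + psi 1 ((k : ℝ) + a)) /
      ((k : ℝ) + a) = myPhi (a + m + 1) - myPhi (a + 1) := by
    intro m
    induction m with
    | zero => simp
    | succ m ih =>
      rw [Finset.sum_Icc_succ_top (Nat.one_le_iff_ne_zero.mpr (Nat.succ_ne_zero m)), ih]
      have hpos : (0 : ℝ) < (m + 1 : ℕ) + a := by positivity
      rw [myKey hpos]
      have e1 : ((m + 1 : ℕ) : ℝ) + a + 1 = a + (m + 1 : ℕ) + 1 := by ring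
      have e2 : ((m + 1 : ℕ) : ℝ) + a = a + m + 1 := by push_cast; ring
      rw [e1, e2]
      ring
  rw [main n]
  simp only [myPhi]
  ring
end
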